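/- For the triangle shape S = {e, a, b} on the free group F₂, the solitaire orbit of the line L_n = {e, a, a², …, a^{n-1}} has cardinality (1/(2ⁿ√5))·((3+√5)ⁿ - (3-√5)ⁿ). -/

import Mathlib

open scoped symmDiff

/-- The free group on two generators. -/
abbrev F2 := FreeGroup Bool

/-- The generator `a` of `F₂`. -/
def fa : F2 := FreeGroup.of true

/-- The generator `b` of `F₂`. -/
def fb : F2 := FreeGroup.of false

/-- The triangle shape `S = {e, a, b}` on the free group. -/
def Sfree : Set F2 := {1, fa, fb}

/-- An `S`-solitaire move on the free group. -/
def FMove (P Q : Set F2) : Prop :=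
  ∃ g : F2, (P ∩ (fun s => g * s) '' Sfree).ncard = 2 ∧
    (Q ∩ (fun s => g * s) '' Sfree).ncard = 2 ∧
    (P ∆ Q) ⊆ (fun s => g * s) '' Sfree ∧ (P ∆ Q).ncard = 2

/-- The line `L_n = {e, a, a², …, a^{n-1}}` in the free group. -/
def lineF (n : ℕ) : Set F2 := {x | ∃ i : ℕ, i < n ∧ x = fa ^ i}

open Matrix
abbrev SL2 := Matrix.SpecialLinearGroup (Fin 2) ℤ
def MA : SL2 := ⟨!![1,2;0,1], by simp [Matrix.det_fin_two_of]⟩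
def MB : SL2 := ⟨!![1,0;2,1], by simp [Matrix.det_fin_two_of]⟩
def phi : F2 →* SL2 := FreeGroup.lift (fun x => cond x MA MB)
@[simp] lemma phi_fa : phi fa = MA := FreeGroup.lift_apply_of
@[simp] lemma phi_fb : phi fb = MB := FreeGroup.lift_apply_of
lemma coe_MA_pow (i : ℕ) : ((MA ^ i : SL2) : Matrix (Fin 2) (Fin 2) ℤ) = !![1, 2*(i:ℤ); 0, 1] := by
  induction i with
  | zero => simp [Matrix.one_fin_two]
  | succ k ih =>
    rw [pow_succ, Matrix.SpecialLinearGroup.coe_mul, ih]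
    rw [show (MA : Matrix (Fin 2) (Fin 2) ℤ) = !![1,2;0,1] from rfl]
    rw [Matrix.mul_fin_two]; norm_num; ring
@[simp] lemma coe_MA_zpow (i : ℤ) : ((MA ^ i : SL2) : Matrix (Fin 2) (Fin 2) ℤ) = !![1, 2*i; 0, 1] := by
  cases i with
  | ofNat k => rw [Int.ofNat_eq_natCast, zpow_natCast, coe_MA_pow]
  | negSucc k =>
    rw [zpow_negSucc, Matrix.SpecialLinearGroup.coe_inv, coe_MA_pow, Matrix.adjugate_fin_two_of]
    norm_num; rw [Int.negSucc_eq]; ring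
@[simp] lemma coe_MB : ((MB : SL2) : Matrix (Fin 2) (Fin 2) ℤ) = !![1,0;2,1] := rfl

-- generic entry extraction
lemma matne {a b c d e f g h : ℤ} (hx : ¬ (a = e ∧ b = f ∧ c = g ∧ d = h)) :
    !![a,b;c,d] ≠ !![e,f;g,h] := by
  intro hEq
  apply hx
  refine ⟨?_, ?_, ?_, ?_⟩
  · exact congrFun (congrFun hEq 0) 0
  · exact congrFun (congrFun hEq 0) 1
  · exact congrFun (congrFun hEq 1) 0
  · exact congrFun (congrFun hEq 1) 1

lemma N1 {i j : ℤ} (h : fa ^ i = fa ^ j) : i = j := by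
  have h2 := congrArg (fun x => ((phi x : SL2) : Matrix (Fin 2) (Fin 2) ℤ)) h
  simp only [map_zpow, phi_fa, coe_MA_zpow] at h2
  have := congrFun (congrFun h2 0) 1
  simp at this
  omega

lemma N2 {i j : ℤ} : fa ^ i * fb ≠ fa ^ j := by
  intro h
  have h2 := congrArg (fun x => ((phi x : SL2) : Matrix (Fin 2) (Fin 2) ℤ)) h
  simp only [_root_.map_mul, map_zpow, phi_fa, phi_fb, Matrix.SpecialLinearGroup.coe_mul,
    coe_MA_zpow, coe_MB, Matrix.mul_fin_two] at h2
  have := congrFun (congrFun h2 1) 0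
  simp at this

lemma N3 {i j : ℤ} (h : fa ^ i * fb = fa ^ j * fb) : i = j := by
  have h2 := congrArg (fun x => ((phi x : SL2) : Matrix (Fin 2) (Fin 2) ℤ)) h
  simp only [_root_.map_mul, map_zpow, phi_fa, phi_fb, Matrix.SpecialLinearGroup.coe_mul,
    coe_MA_zpow, coe_MB, Matrix.mul_fin_two] at h2
  have := congrFun (congrFun h2 0) 1
  simp at this
  omega

lemma N4a {i j k : ℤ} : fa ^ i * fb * fa ^ j ≠ fa ^ k := by
  intro h
  have h2 := congrArg (fun x => ((phi x : SL2) : Matrix (Fin 2) (Fin 2) ℤ)) h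
  simp only [_root_.map_mul, map_zpow, phi_fa, phi_fb, Matrix.SpecialLinearGroup.coe_mul,
    coe_MA_zpow, coe_MB, Matrix.mul_fin_two] at h2
  have := congrFun (congrFun h2 1) 0
  simp at this

lemma N4b {i j k : ℤ} (hj : j ≠ 0) : fa ^ i * fb * fa ^ j ≠ fa ^ k * fb := by
  intro h
  have h2 := congrArg (fun x => ((phi x : SL2) : Matrix (Fin 2) (Fin 2) ℤ)) h
  simp only [_root_.map_mul, map_zpow, phi_fa, phi_fb, Matrix.SpecialLinearGroup.coe_mul,
    coe_MA_zpow, coe_MB, Matrix.mul_fin_two] at h2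
  have := congrFun (congrFun h2 1) 1
  simp at this
  omega

lemma N5a {i k : ℤ} : fa ^ i * fb * fb ≠ fa ^ k := by
  intro h
  have h2 := congrArg (fun x => ((phi x : SL2) : Matrix (Fin 2) (Fin 2) ℤ)) h
  simp only [_root_.map_mul, map_zpow, phi_fa, phi_fb, Matrix.SpecialLinearGroup.coe_mul,
    coe_MA_zpow, coe_MB, Matrix.mul_fin_two] at h2
  have := congrFun (congrFun h2 1) 0
  simp at this

lemma N5b {i k : ℤ} : fa ^ i * fb * fb ≠ fa ^ k * fb := by
  intro h
  have h2 := congrArg (fun x => ((phi x : SL2) : Matrix (Fin 2) (Fin 2) ℤ)) h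
  simp only [_root_.map_mul, map_zpow, phi_fa, phi_fb, Matrix.SpecialLinearGroup.coe_mul,
    coe_MA_zpow, coe_MB, Matrix.mul_fin_two] at h2
  have := congrFun (congrFun h2 1) 0
  simp at this

lemma N6a {i j k : ℤ} : fa ^ i * fb * fa ^ j * fb ≠ fa ^ k := by
  intro h
  have h2 := congrArg (fun x => ((phi x : SL2) : Matrix (Fin 2) (Fin 2) ℤ)) h
  simp only [_root_.map_mul, map_zpow, phi_fa, phi_fb, Matrix.SpecialLinearGroup.coe_mul,
    coe_MA_zpow, coe_MB, Matrix.mul_fin_two] at h2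
  have := congrFun (congrFun h2 1) 0
  simp at this
  omega

lemma N6b {i j k : ℤ} : fa ^ i * fb * fa ^ j * fb ≠ fa ^ k * fb := by
  intro h
  have h2 := congrArg (fun x => ((phi x : SL2) : Matrix (Fin 2) (Fin 2) ℤ)) h
  simp only [_root_.map_mul, map_zpow, phi_fa, phi_fb, Matrix.SpecialLinearGroup.coe_mul,
    coe_MA_zpow, coe_MB, Matrix.mul_fin_two] at h2
  have := congrFun (congrFun h2 1) 0
  simp at this
  omega

/-! ### Encoding words -/

inductive St | E | A | B
deriving DecidableEq

def pos (i : ℕ) : St → F2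
  | .E => fa ^ (i:ℤ)
  | .B => fa ^ (i:ℤ) * fb
  | .A => fa ^ ((i:ℤ)-1) * fb

def Valid {n : ℕ} (w : Fin n → St) : Prop :=
  (∀ i : Fin n, w i = .A → 0 < i.1) ∧
  (∀ i : Fin n, w i = .B → i.1 + 1 < n) ∧
  (∀ i j : Fin n, j.1 = i.1 + 1 → w i = .B → w j ≠ .A)

def enc {n : ℕ} (w : Fin n → St) : Set F2 := Set.range (fun i => pos i.1 (w i))

lemma mem_enc {n : ℕ} {w : Fin n → St} {x : F2} :
    x ∈ enc w ↔ ∃ i : Fin n, x = pos i.1 (w i) := by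
  simp [enc, Set.mem_range, eq_comm]

lemma powE_mem {n : ℕ} {w : Fin n → St} {k : ℕ} :
    fa ^ (k:ℤ) ∈ enc w ↔ ∃ hk : k < n, w ⟨k, hk⟩ = .E := by
  constructor
  · rw [mem_enc]
    rintro ⟨i, hi⟩
    cases h : w i <;> rw [h] at hi <;> simp only [pos] at hi
    · have := N1 hi.symm
      have hik : i.1 = k := by exact_mod_cast this
      exact ⟨hik ▸ i.2, by rw [← h]; congr 1; exact Fin.ext hik.symm⟩
    · exact absurd hi.symm N2
    · exact absurd hi.symm N2
  · rintro ⟨hk, hw⟩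
    rw [mem_enc]
    exact ⟨⟨k, hk⟩, by rw [hw]; rfl⟩

lemma powB_mem {n : ℕ} {w : Fin n → St} {k : ℕ} :
    fa ^ (k:ℤ) * fb ∈ enc w ↔
      (∃ hk : k < n, w ⟨k, hk⟩ = .B) ∨ (∃ hk : k+1 < n, w ⟨k+1, hk⟩ = .A) := by
  constructor
  · rw [mem_enc]
    rintro ⟨i, hi⟩
    cases h : w i <;> rw [h] at hi <;> simp only [pos] at hi
    · exact absurd hi N2
    · -- A : (i:ℤ)-1 = k so i = k+1
      have := N3 hi.symm
      have hik : i.1 = k + 1 := by omega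
      refine Or.inr ⟨hik ▸ i.2, ?_⟩
      rw [← h]; congr 1; exact Fin.ext hik.symm
    · have := N3 hi.symm
      have hik : i.1 = k := by exact_mod_cast this
      refine Or.inl ⟨hik ▸ i.2, ?_⟩
      rw [← h]; congr 1; exact Fin.ext hik.symm
  · rintro (⟨hk, hw⟩ | ⟨hk, hw⟩) <;> rw [mem_enc]
    · exact ⟨⟨k, hk⟩, by rw [hw]; rfl⟩
    · refine ⟨⟨k+1, hk⟩, by rw [hw]; simp only [pos]; congr 2; push_cast; ring⟩

lemma posmap_inj {n : ℕ} {w : Fin n → St} (hw : Valid w) :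
    Function.Injective (fun i : Fin n => pos i.1 (w i)) := by
  intro i j hij
  simp only at hij
  by_contra hne
  cases hi : w i <;> cases hj : w j <;> rw [hi, hj] at hij <;> simp only [pos] at hij
  · exact hne (Fin.ext (by exact_mod_cast N1 hij))
  · exact N2 hij.symm
  · exact N2 hij.symm
  · exact N2 hij
  · exact hne (Fin.ext (by have := N3 hij; omega))
  · -- i is A, j is B : (i:ℤ)-1 = j so i = j+1, pair (j, i) is BA
    have := N3 hij
    have hji : i.1 = j.1 + 1 := by omega
    exact hw.2.2 j i hji hj hi
  · exact N2 hij
  · -- i is B, j is A : i = j-1, pair (i, j) is BA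
    have := N3 hij
    have hji : j.1 = i.1 + 1 := by omega
    exact hw.2.2 i j hji hi hj
  · exact hne (Fin.ext (by exact_mod_cast N3 hij))

lemma range_update {α β : Type*} [DecidableEq α] {f : α → β} (hf : Function.Injective f)
    (i : α) (b : β) :
    Set.range (Function.update f i b) = (Set.range f \ {f i}) ∪ {b} := by
  ext y
  simp only [Set.mem_union, Set.mem_diff, Set.mem_range, Set.mem_singleton_iff]
  constructor
  · rintro ⟨k, hk⟩
    rcases eq_or_ne k i with rfl | hki
    · right; rw [Function.update_self] at hk; exact hk.symm
    · left
      rw [Function.update_of_ne hki] at hk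
      exact ⟨⟨k, hk⟩, fun h => hki (hf (hk ▸ h))⟩
  · rintro (⟨⟨k, hk⟩, hne⟩ | rfl)
    · have hki : k ≠ i := fun h => hne (by rw [← hk, h])
      exact ⟨k, by rw [Function.update_of_ne hki]; exact hk⟩
    · exact ⟨i, by simp⟩

lemma range_update2 {α β : Type*} [DecidableEq α] {f : α → β} (hf : Function.Injective f)
    {i j : α} (hij : i ≠ j) (bi bj : β) :
    Set.range (Function.update (Function.update f i bi) j bj) =
      (Set.range f \ {f i, f j}) ∪ {bi, bj} := by
  ext y
  simp only [Set.mem_union, Set.mem_diff, Set.mem_range, Set.mem_singleton_iff,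
    Set.mem_insert_iff]
  constructor
  · rintro ⟨k, hk⟩
    rcases eq_or_ne k j with rfl | hkj
    · rw [Function.update_self] at hk; right; right; exact hk.symm
    rw [Function.update_of_ne hkj] at hk
    rcases eq_or_ne k i with rfl | hki
    · rw [Function.update_self] at hk; right; left; exact hk.symm
    rw [Function.update_of_ne hki] at hk
    exact Or.inl ⟨⟨k, hk⟩, by
      push_neg
      exact ⟨fun h => hki (hf (hk ▸ h)), fun h => hkj (hf (hk ▸ h))⟩⟩
  · rintro (⟨⟨k, hk⟩, hne⟩ | rfl | rfl)
    · push_neg at hne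
      have hki : k ≠ i := fun h => hne.1 (by rw [← hk, h])
      have hkj : k ≠ j := fun h => hne.2 (by rw [← hk, h])
      exact ⟨k, by rw [Function.update_of_ne hkj, Function.update_of_ne hki]; exact hk⟩
    · exact ⟨i, by rw [Function.update_of_ne hij, Function.update_self]⟩
    · exact ⟨j, by simp⟩

lemma enc_update {n : ℕ} {w : Fin n → St} (hw : Valid w) (i : Fin n) (s : St) :
    enc (Function.update w i s) = (enc w \ {pos i.1 (w i)}) ∪ {pos i.1 s} := by
  have h := range_update (β := F2) (posmap_inj hw) i (pos i.1 s)
  rw [enc]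
  rw [show (fun k : Fin n => pos k.1 (Function.update w i s k)) =
      Function.update (fun k : Fin n => pos k.1 (w k)) i (pos i.1 s) from ?_, h]
  · rfl
  · funext k
    rcases eq_or_ne k i with rfl | hki
    · simp
    · simp [Function.update_of_ne hki]

lemma enc_update2 {n : ℕ} {w : Fin n → St} (hw : Valid w) {i j : Fin n} (hij : i ≠ j)
    (si sj : St) :
    enc (Function.update (Function.update w i si) j sj) =
      (enc w \ {pos i.1 (w i), pos j.1 (w j)}) ∪ {pos i.1 si, pos j.1 sj} := by
  have h := range_update2 (β := F2) (posmap_inj hw) hij (pos i.1 si) (pos j.1 sj)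
  rw [enc]
  rw [show (fun k : Fin n => pos k.1 (Function.update (Function.update w i si) j sj k)) =
      Function.update (Function.update (fun k : Fin n => pos k.1 (w k)) i (pos i.1 si)) j
        (pos j.1 sj) from ?_, h]
  · rfl
  · funext k
    rcases eq_or_ne k j with rfl | hkj
    · simp
    rcases eq_or_ne k i with rfl | hki
    · simp [Function.update_of_ne hkj, Function.update_of_ne hij.symm]
    · simp [Function.update_of_ne hkj, Function.update_of_ne hki]

lemma swap_helper {α : Type*} (P : Set α) {x y z : α} (hy : y ∈ P) (hxy : x ≠ y) :
    (P \ {x, y}) ∪ {y, z} = (P \ {x}) ∪ {z} := by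
  ext t
  simp only [Set.mem_union, Set.mem_diff, Set.mem_insert_iff, Set.mem_singleton_iff]
  by_cases ht : t = y
  · subst ht; tauto
  · tauto

lemma inter_triple {α : Type*} {P : Set α} {x y z : α} (hxy : x ≠ y) (hxz : x ≠ z)
    (hyz : y ≠ z) (h : (P ∩ {x,y,z}).ncard = 2) :
    (x ∈ P ∧ y ∈ P ∧ z ∉ P) ∨ (x ∈ P ∧ z ∈ P ∧ y ∉ P) ∨ (y ∈ P ∧ z ∈ P ∧ x ∉ P) := by
  by_cases hx : x ∈ P <;> by_cases hy : y ∈ P <;> by_cases hz : z ∈ P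
  · exfalso
    have he : P ∩ {x,y,z} = {x,y,z} := by
      ext t
      simp only [Set.mem_inter_iff, Set.mem_insert_iff, Set.mem_singleton_iff]
      constructor
      · tauto
      · rintro (rfl|rfl|rfl) <;> tauto
    rw [he] at h
    rw [Set.ncard_insert_of_notMem (by simp [hxy, hxz]),
      Set.ncard_pair hyz] at h
    omega
  · exact Or.inl ⟨hx, hy, hz⟩
  · exact Or.inr (Or.inl ⟨hx, hz, hy⟩)
  · exfalso
    have he : P ∩ {x,y,z} = {x} := by
      ext t
      simp only [Set.mem_inter_iff, Set.mem_insert_iff, Set.mem_singleton_iff]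
      constructor
      · rintro ⟨ht, rfl|rfl|rfl⟩ <;> tauto
      · rintro rfl; tauto
    rw [he, Set.ncard_singleton] at h; omega
  · exact Or.inr (Or.inr ⟨hy, hz, hx⟩)
  · exfalso
    have he : P ∩ {x,y,z} = {y} := by
      ext t
      simp only [Set.mem_inter_iff, Set.mem_insert_iff, Set.mem_singleton_iff]
      constructor
      · rintro ⟨ht, rfl|rfl|rfl⟩ <;> tauto
      · rintro rfl; tauto
    rw [he, Set.ncard_singleton] at h; omega
  · exfalso
    have he : P ∩ {x,y,z} = {z} := by
      ext t
      simp only [Set.mem_inter_iff, Set.mem_insert_iff, Set.mem_singleton_iff]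
      constructor
      · rintro ⟨ht, rfl|rfl|rfl⟩ <;> tauto
      · rintro rfl; tauto
    rw [he, Set.ncard_singleton] at h; omega
  · exfalso
    have he : P ∩ {x,y,z} = ∅ := by
      ext t
      simp only [Set.mem_inter_iff, Set.mem_insert_iff, Set.mem_singleton_iff,
        Set.mem_empty_iff_false, iff_false]
      rintro ⟨ht, rfl|rfl|rfl⟩ <;> tauto
    rw [he, Set.ncard_empty] at h; omega

open scoped symmDiff in
lemma move_shape {α : Type*} {P Q : Set α} {x y z : α} (hxy : x ≠ y) (hxz : x ≠ z)
    (hyz : y ≠ z) (hP2 : (P ∩ {x,y,z}).ncard = 2) (hQ2 : (Q ∩ {x,y,z}).ncard = 2)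
    (hsub : P ∆ Q ⊆ {x,y,z}) (hd : (P ∆ Q).ncard = 2) :
    ∃ u v, u ∈ P ∧ v ∉ P ∧ u ∈ ({x,y,z} : Set α) ∧ v ∈ ({x,y,z} : Set α) ∧ u ≠ v ∧
      Q = (P \ {u}) ∪ {v} := by
  classical
  obtain ⟨u, v, huv, hPQ⟩ := Set.ncard_eq_two.1 hd
  have hTfin : ({x,y,z} : Set α).Finite := (Set.finite_singleton z).insert y |>.insert x
  have huT : u ∈ ({x,y,z} : Set α) := hsub (hPQ ▸ (by simp : u ∈ ({u,v} : Set α)))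
  have hvT : v ∈ ({x,y,z} : Set α) := hsub (hPQ ▸ (by simp : v ∈ ({u,v} : Set α)))
  have key : ∀ t, t ∈ Q ↔ ((t ∈ P ∧ t ≠ u ∧ t ≠ v) ∨ (t ∉ P ∧ (t = u ∨ t = v))) := by
    intro t
    have ht := Set.ext_iff.1 hPQ t
    rw [Set.mem_symmDiff] at ht
    simp only [Set.mem_insert_iff, Set.mem_singleton_iff] at ht
    by_cases htP : t ∈ P <;> by_cases h1 : t = u <;> by_cases h2 : t = v <;> tauto
  by_cases huP : u ∈ P <;> by_cases hvP : v ∈ P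
  · -- both in P : contradiction
    exfalso
    have hsubPT : ({u,v} : Set α) ⊆ P ∩ {x,y,z} := by
      rintro t ht
      simp only [Set.mem_insert_iff, Set.mem_singleton_iff] at ht
      rcases ht with rfl | rfl <;> exact ⟨by assumption, by assumption⟩
    have hPT : P ∩ {x,y,z} = {u,v} :=
      (Set.eq_of_subset_of_ncard_le hsubPT (by rw [hP2, Set.ncard_pair huv])
        (hTfin.inter_of_right P)).symm
    have : Q ∩ {x,y,z} = ∅ := by
      ext t
      simp only [Set.mem_inter_iff, Set.mem_empty_iff_false, iff_false]
      rintro ⟨htQ, htT⟩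
      rw [key t] at htQ
      rcases htQ with ⟨htP, hu, hv⟩ | ⟨htP, h | h⟩
      · have : t ∈ P ∩ {x,y,z} := ⟨htP, htT⟩
        rw [hPT] at this
        simp only [Set.mem_insert_iff, Set.mem_singleton_iff] at this
        tauto
      · exact htP (h ▸ huP)
      · exact htP (h ▸ hvP)
    rw [this, Set.ncard_empty] at hQ2; omega
  · exact ⟨u, v, huP, hvP, huT, hvT, huv, by
      ext t
      rw [key t]
      simp only [Set.mem_union, Set.mem_diff, Set.mem_singleton_iff]
      by_cases h1 : t = u <;> by_cases h2 : t = v <;>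
        first
        | (subst h1; tauto)
        | (subst h2; tauto)
        | tauto⟩
  · refine ⟨v, u, hvP, huP, hvT, huT, huv.symm, ?_⟩
    ext t
    rw [key t]
    simp only [Set.mem_union, Set.mem_diff, Set.mem_singleton_iff]
    by_cases h1 : t = u <;> by_cases h2 : t = v <;>
      first
      | (subst h1; tauto)
      | (subst h2; tauto)
      | tauto
  · -- both not in P : contradiction
    exfalso
    have hdisj : Disjoint (P ∩ {x,y,z}) ({u,v} : Set α) := by
      rw [Set.disjoint_right]
      rintro t ht
      simp only [Set.mem_insert_iff, Set.mem_singleton_iff] at ht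
      rcases ht with rfl | rfl <;> simp_all
    have hQT : Q ∩ {x,y,z} = (P ∩ {x,y,z}) ∪ {u,v} := by
      ext t
      simp only [Set.mem_inter_iff, Set.mem_union, Set.mem_insert_iff, Set.mem_singleton_iff]
      constructor
      · rintro ⟨htQ, htT⟩
        rw [key t] at htQ
        tauto
      · rintro (⟨htP, htT⟩ | h | h)
        · refine ⟨(key t).2 (Or.inl ⟨htP, ?_, ?_⟩), htT⟩
          · exact fun h => huP (h ▸ htP)
          · exact fun h => hvP (h ▸ htP)
        · subst h
          exact ⟨(key t).2 (Or.inr ⟨huP, Or.inl rfl⟩), by simpa using huT⟩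
        · subst h
          exact ⟨(key t).2 (Or.inr ⟨hvP, Or.inr rfl⟩), by simpa using hvT⟩
    rw [hQT, Set.ncard_union_eq hdisj (hTfin.inter_of_right P)
      ((Set.finite_singleton v).insert u), hP2, Set.ncard_pair huv] at hQ2
    omega

open scoped symmDiff

lemma W_eq (g : F2) : (fun s => g * s) '' Sfree = {g, g * fa, g * fb} := by
  simp [Sfree, Set.image_insert_eq, Set.image_singleton, mul_one]

lemma fa_ne_one : fa ≠ 1 := by
  intro h
  have : (1:ℤ) = 0 := N1 (by rw [zpow_one, zpow_zero, h])
  omega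

lemma fb_ne_one : fb ≠ 1 := by
  intro h
  exact N2 (i := 0) (j := 0) (by simp [h])

lemma fa_ne_fb : fa ≠ fb := by
  intro h
  exact N2 (i := 0) (j := 1) (by simp [← h])

@[simp] lemma posE (i : ℕ) : pos i .E = fa ^ (i:ℤ) := rfl
@[simp] lemma posB (i : ℕ) : pos i .B = fa ^ (i:ℤ) * fb := rfl
@[simp] lemma posA (i : ℕ) : pos i .A = fa ^ ((i:ℤ)-1) * fb := rfl

lemma nm1 {n : ℕ} {w : Fin n → St} {i j : ℤ} (hj : j ≠ 0) : fa^i * fb * fa^j ∉ enc w := by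
  rw [mem_enc]
  rintro ⟨k, hk⟩
  cases h : w k <;> rw [h] at hk <;> simp only [posE, posB, posA] at hk
  · exact N4a hk
  · exact N4b hj hk
  · exact N4b hj hk

lemma nm2 {n : ℕ} {w : Fin n → St} {i : ℤ} : fa^i * fb * fb ∉ enc w := by
  rw [mem_enc]
  rintro ⟨k, hk⟩
  cases h : w k <;> rw [h] at hk <;> simp only [posE, posB, posA] at hk
  · exact N5a hk
  · exact N5b hk
  · exact N5b hk

lemma nm3 {n : ℕ} {w : Fin n → St} {i j : ℤ} : fa^i * fb * fa^j * fb ∉ enc w := by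
  rw [mem_enc]
  rintro ⟨k, hk⟩
  cases h : w k <;> rw [h] at hk <;> simp only [posE, posB, posA] at hk
  · exact N6a hk
  · exact N6b hk
  · exact N6b hk

lemma caseI {n : ℕ} {w : Fin n → St} {g : F2}
    (hg : g ∈ enc w) (hga : g * fa ∈ enc w) :
    ∃ i j : Fin n, j.1 = i.1 + 1 ∧ g = fa ^ (i.1:ℤ) ∧ w i = .E ∧ w j = .E := by
  obtain ⟨i, hi⟩ := mem_enc.1 hg
  cases hwi : w i <;> rw [hwi] at hi <;> simp only [posE, posB, posA] at hi
  · have h2 : fa ^ (((i.1+1:ℕ)):ℤ) ∈ enc w := by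
      push_cast
      rw [_root_.zpow_add_one, ← hi]
      exact hga
    obtain ⟨hlt, hE⟩ := powE_mem.1 h2
    exact ⟨i, ⟨i.1+1, hlt⟩, rfl, hi, hwi, hE⟩
  · rw [hi, ← zpow_one fa] at hga
    exact absurd hga (nm1 one_ne_zero)
  · rw [hi, ← zpow_one fa] at hga
    exact absurd hga (nm1 one_ne_zero)

lemma caseII {n : ℕ} {w : Fin n → St} {g : F2}
    (hg : g ∈ enc w) (hgb : g * fb ∈ enc w) :
    ∃ i j : Fin n, j.1 = i.1 + 1 ∧ g = fa ^ (i.1:ℤ) ∧ w i = .E ∧ w j = .A := by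
  obtain ⟨i, hi⟩ := mem_enc.1 hg
  cases hwi : w i <;> rw [hwi] at hi <;> simp only [posE, posB, posA] at hi
  · rw [hi] at hgb
    rcases powB_mem.1 hgb with ⟨hlt, hB⟩ | ⟨hlt, hA⟩
    · have : (⟨i.1, hlt⟩ : Fin n) = i := Fin.ext rfl
      rw [this, hwi] at hB
      exact absurd hB (by simp)
    · exact ⟨i, ⟨i.1+1, hlt⟩, rfl, hi, hwi, hA⟩
  · rw [hi] at hgb
    exact absurd hgb nm2
  · rw [hi] at hgb
    exact absurd hgb nm2

lemma caseIII {n : ℕ} {w : Fin n → St} {g : F2}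
    (hga : g * fa ∈ enc w) (hgb : g * fb ∈ enc w) :
    ∃ i j : Fin n, j.1 = i.1 + 1 ∧ g = fa ^ (i.1:ℤ) ∧ w i = .B ∧ w j = .E := by
  obtain ⟨m, hm⟩ := mem_enc.1 hga
  cases hwm : w m <;> rw [hwm] at hm <;> simp only [posE, posB, posA] at hm
  · -- w m = E : g * fa = fa^m
    have hg : g = fa ^ ((m.1:ℤ)-1) := by
      rw [_root_.zpow_sub_one]
      exact eq_mul_inv_iff_mul_eq.2 hm
    rw [hg] at hgb
    obtain ⟨k, hk⟩ := mem_enc.1 hgb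
    cases hwk : w k <;> rw [hwk] at hk <;> simp only [posE, posB, posA] at hk
    · exact absurd hk N2
    · -- w k = A : fa^(m-1) fb = fa^(k-1) fb, so k = m, contradiction
      have h3 := N3 hk
      have : k = m := Fin.ext (by omega)
      rw [this, hwm] at hwk
      exact absurd hwk (by simp)
    · -- w k = B : fa^(m-1) fb = fa^k fb, so m = k+1
      have h3 := N3 hk
      have hkm : m.1 = k.1 + 1 := by omega
      refine ⟨k, m, hkm, ?_, hwk, hwm⟩
      rw [hg, show ((m.1:ℤ)-1) = (k.1:ℤ) by omega]
  · -- w m = A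
    have hg : g = fa ^ ((m.1:ℤ)-1) * fb * fa ^ (-1:ℤ) := by
      rw [_root_.zpow_neg_one]
      exact eq_mul_inv_iff_mul_eq.2 hm
    rw [hg] at hgb
    exact absurd hgb nm3
  · -- w m = B
    have hg : g = fa ^ (m.1:ℤ) * fb * fa ^ (-1:ℤ) := by
      rw [_root_.zpow_neg_one]
      exact eq_mul_inv_iff_mul_eq.2 hm
    rw [hg] at hgb
    exact absurd hgb nm3


lemma pos_j_A {n : ℕ} (i j : Fin n) (hij : j.1 = i.1 + 1) :
    pos j.1 .A = fa ^ (i.1:ℤ) * fb := by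
  simp only [posA]
  rw [show ((j.1:ℤ)-1) = (i.1:ℤ) by omega]

lemma pos_j_E {n : ℕ} (i j : Fin n) (hij : j.1 = i.1 + 1) :
    pos j.1 .E = fa ^ (i.1:ℤ) * fa := by
  simp only [posE]
  rw [← _root_.zpow_add_one]
  congr 1
  omega

lemma fmove_closure {n : ℕ} {w : Fin n → St} (hw : Valid w) {Q : Set F2}
    (h : FMove (enc w) Q) : ∃ w' : Fin n → St, Valid w' ∧ Q = enc w' := by
  classical
  obtain ⟨g, hP2, hQ2, hsub, hd⟩ := h
  rw [W_eq] at hP2 hQ2 hsub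
  have hne1 : g ≠ g * fa := fun h => fa_ne_one (left_eq_mul.1 h)
  have hne2 : g ≠ g * fb := fun h => fb_ne_one (left_eq_mul.1 h)
  have hne3 : g * fa ≠ g * fb := fun h => fa_ne_fb (mul_left_cancel h)
  obtain ⟨u, v, huP, hvP, huT, hvT, huv, hQ⟩ := move_shape hne1 hne2 hne3 hP2 hQ2 hsub hd
  have htwo := inter_triple hne1 hne2 hne3 hP2
  simp only [Set.mem_insert_iff, Set.mem_singleton_iff] at huT hvT
  rcases htwo with ⟨hg, hga, hgb⟩ | ⟨hg, hgb, hga⟩ | ⟨hga, hgb, hg⟩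
  · -- Case I : g, g*fa ∈ P, g*fb ∉ P ; pattern (E,E)
    obtain ⟨i, j, hij, hgEq, hwi, hwj⟩ := caseI hg hga
    have hine : i ≠ j := fun h => by omega
    have hvEq : v = g * fb := by
      rcases hvT with hv | hv | hv
      · exact absurd (hv ▸ hg) hvP
      · exact absurd (hv ▸ hga) hvP
      · exact hv
    rcases huT with hu | hu | hu
    · -- u = g : E at i becomes B
      rw [hu] at hQ
      refine ⟨Function.update w i .B, ?_, ?_⟩
      · refine ⟨fun k hk => ?_, fun k hk => ?_, fun k l hl hkB hlA => ?_⟩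
        · rcases eq_or_ne k i with rfl | hki
          · simp at hk
          · rw [Function.update_of_ne hki] at hk; exact hw.1 k hk
        · rcases eq_or_ne k i with rfl | hki
          · omega
          · rw [Function.update_of_ne hki] at hk; exact hw.2.1 k hk
        · rcases eq_or_ne l i with rfl | hli
          · simp at hlA
          rw [Function.update_of_ne hli] at hlA
          rcases eq_or_ne k i with rfl | hki
          · have : l = j := Fin.ext (by omega)
            rw [this, hwj] at hlA; simp at hlA
          · rw [Function.update_of_ne hki] at hkB
            exact hw.2.2 k l hl hkB hlA
      · rw [enc_update hw i .B, hwi, posE, posB, ← hgEq, hQ, hvEq]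
    · -- u = g * fa : E at j becomes A
      rw [hu] at hQ
      refine ⟨Function.update w j .A, ?_, ?_⟩
      · refine ⟨fun k hk => ?_, fun k hk => ?_, fun k l hl hkB hlA => ?_⟩
        · rcases eq_or_ne k j with rfl | hkj
          · omega
          · rw [Function.update_of_ne hkj] at hk; exact hw.1 k hk
        · rcases eq_or_ne k j with rfl | hkj
          · simp at hk
          · rw [Function.update_of_ne hkj] at hk; exact hw.2.1 k hk
        · rcases eq_or_ne k j with rfl | hkj
          · simp at hkB
          rw [Function.update_of_ne hkj] at hkB
          rcases eq_or_ne l j with rfl | hlj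
          · have : k = i := Fin.ext (by omega)
            rw [this, hwi] at hkB; simp at hkB
          · rw [Function.update_of_ne hlj] at hlA
            exact hw.2.2 k l hl hkB hlA
      · rw [enc_update hw j .A, hwj, pos_j_A i j hij, pos_j_E i j hij, ← hgEq, hQ, hvEq]
    · exact absurd (hu ▸ huP) hgb
  · -- Case II : g, g*fb ∈ P, g*fa ∉ P ; pattern (E,A)
    obtain ⟨i, j, hij, hgEq, hwi, hwj⟩ := caseII hg hgb
    have hine : i ≠ j := fun h => by omega
    have hvEq : v = g * fa := by
      rcases hvT with hv | hv | hv
      · exact absurd (hv ▸ hg) hvP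
      · exact hv
      · exact absurd (hv ▸ hgb) hvP
    rcases huT with hu | hu | hu
    · -- u = g : (E,A) at (i,j) becomes (B,E)
      rw [hu] at hQ
      refine ⟨Function.update (Function.update w i .B) j .E, ?_, ?_⟩
      · refine ⟨fun k hk => ?_, fun k hk => ?_, fun k l hl hkB hlA => ?_⟩
        · rcases eq_or_ne k j with rfl | hkj
          · simp at hk
          rw [Function.update_of_ne hkj] at hk
          rcases eq_or_ne k i with rfl | hki
          · simp at hk
          · rw [Function.update_of_ne hki] at hk; exact hw.1 k hk
        · rcases eq_or_ne k j with rfl | hkj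
          · simp at hk
          rw [Function.update_of_ne hkj] at hk
          rcases eq_or_ne k i with rfl | hki
          · omega
          · rw [Function.update_of_ne hki] at hk; exact hw.2.1 k hk
        · rcases eq_or_ne l j with rfl | hlj
          · simp at hlA
          rw [Function.update_of_ne hlj] at hlA
          rcases eq_or_ne l i with rfl | hli
          · simp at hlA
          rw [Function.update_of_ne hli] at hlA
          rcases eq_or_ne k j with rfl | hkj
          · simp at hkB
          rw [Function.update_of_ne hkj] at hkB
          rcases eq_or_ne k i with rfl | hki
          · exact hlj (Fin.ext (by omega))
          · rw [Function.update_of_ne hki] at hkB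
            exact hw.2.2 k l hl hkB hlA
      · rw [enc_update2 hw hine .B .E, hwi, hwj, posB, pos_j_A i j hij,
          pos_j_E i j hij, posE, ← hgEq]
        rw [swap_helper (enc w) hgb hne2, hQ, hvEq]
    · exact absurd (hu ▸ huP) hga
    · -- u = g * fb : A at j becomes E
      rw [hu] at hQ
      refine ⟨Function.update w j .E, ?_, ?_⟩
      · refine ⟨fun k hk => ?_, fun k hk => ?_, fun k l hl hkB hlA => ?_⟩
        · rcases eq_or_ne k j with rfl | hkj
          · simp at hk
          · rw [Function.update_of_ne hkj] at hk; exact hw.1 k hk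
        · rcases eq_or_ne k j with rfl | hkj
          · simp at hk
          · rw [Function.update_of_ne hkj] at hk; exact hw.2.1 k hk
        · rcases eq_or_ne l j with rfl | hlj
          · simp at hlA
          rw [Function.update_of_ne hlj] at hlA
          rcases eq_or_ne k j with rfl | hkj
          · simp at hkB
          · rw [Function.update_of_ne hkj] at hkB
            exact hw.2.2 k l hl hkB hlA
      · rw [enc_update hw j .E, hwj, pos_j_A i j hij, pos_j_E i j hij, ← hgEq, hQ, hvEq]
  · -- Case III : g*fa, g*fb ∈ P, g ∉ P ; pattern (B,E)
    obtain ⟨i, j, hij, hgEq, hwi, hwj⟩ := caseIII hga hgb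
    have hine : i ≠ j := fun h => by omega
    have hvEq : v = g := by
      rcases hvT with hv | hv | hv
      · exact hv
      · exact absurd (hv ▸ hga) hvP
      · exact absurd (hv ▸ hgb) hvP
    rcases huT with hu | hu | hu
    · exact absurd (hu ▸ huP) hg
    · -- u = g * fa : (B,E) at (i,j) becomes (E,A)
      rw [hu] at hQ
      refine ⟨Function.update (Function.update w i .E) j .A, ?_, ?_⟩
      · refine ⟨fun k hk => ?_, fun k hk => ?_, fun k l hl hkB hlA => ?_⟩
        · rcases eq_or_ne k j with rfl | hkj
          · omega
          rw [Function.update_of_ne hkj] at hk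
          rcases eq_or_ne k i with rfl | hki
          · simp at hk
          · rw [Function.update_of_ne hki] at hk; exact hw.1 k hk
        · rcases eq_or_ne k j with rfl | hkj
          · simp at hk
          rw [Function.update_of_ne hkj] at hk
          rcases eq_or_ne k i with rfl | hki
          · simp at hk
          · rw [Function.update_of_ne hki] at hk; exact hw.2.1 k hk
        · rcases eq_or_ne k j with rfl | hkj
          · simp at hkB
          rw [Function.update_of_ne hkj] at hkB
          rcases eq_or_ne k i with rfl | hki
          · simp at hkB
          rw [Function.update_of_ne hki] at hkB
          rcases eq_or_ne l j with rfl | hlj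
          · exact hki (Fin.ext (by omega))
          rw [Function.update_of_ne hlj] at hlA
          rcases eq_or_ne l i with rfl | hli
          · simp at hlA
          · rw [Function.update_of_ne hli] at hlA
            exact hw.2.2 k l hl hkB hlA
      · rw [enc_update2 hw hine .E .A, hwi, hwj, posB, pos_j_A i j hij,
          pos_j_E i j hij, posE, ← hgEq]
        rw [Set.pair_comm (g * fb) (g * fa), Set.pair_comm g (g * fb)]
        rw [swap_helper (enc w) hgb hne3, hQ, hvEq]
    · -- u = g * fb : B at i becomes E
      rw [hu] at hQ
      refine ⟨Function.update w i .E, ?_, ?_⟩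
      · refine ⟨fun k hk => ?_, fun k hk => ?_, fun k l hl hkB hlA => ?_⟩
        · rcases eq_or_ne k i with rfl | hki
          · simp at hk
          · rw [Function.update_of_ne hki] at hk; exact hw.1 k hk
        · rcases eq_or_ne k i with rfl | hki
          · simp at hk
          · rw [Function.update_of_ne hki] at hk; exact hw.2.1 k hk
        · rcases eq_or_ne k i with rfl | hki
          · simp at hkB
          rw [Function.update_of_ne hki] at hkB
          rcases eq_or_ne l i with rfl | hli
          · simp at hlA
          · rw [Function.update_of_ne hli] at hlA
            exact hw.2.2 k l hl hkB hlA
      · rw [enc_update hw i .E, hwi, posB, posE, ← hgEq, hQ, hvEq]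

lemma inter_card2a {α : Type*} {P : Set α} {x y z : α} (hx : x ∈ P) (hy : y ∈ P)
    (hz : z ∉ P) (hxy : x ≠ y) : (P ∩ {x,y,z}).ncard = 2 := by
  have he : P ∩ {x,y,z} = {x,y} := by
    ext t
    simp only [Set.mem_inter_iff, Set.mem_insert_iff, Set.mem_singleton_iff]
    constructor
    · rintro ⟨ht, rfl|rfl|rfl⟩ <;> tauto
    · rintro (rfl|rfl) <;> tauto
  rw [he, Set.ncard_pair hxy]

lemma inter_card2b {α : Type*} {P : Set α} {x y z : α} (hx : x ∈ P) (hy : y ∉ P)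
    (hz : z ∈ P) (hxz : x ≠ z) : (P ∩ {x,y,z}).ncard = 2 := by
  have he : P ∩ {x,y,z} = {x,z} := by
    ext t
    simp only [Set.mem_inter_iff, Set.mem_insert_iff, Set.mem_singleton_iff]
    constructor
    · rintro ⟨ht, rfl|rfl|rfl⟩ <;> tauto
    · rintro (rfl|rfl) <;> tauto
  rw [he, Set.ncard_pair hxz]

lemma inter_card2c {α : Type*} {P : Set α} {x y z : α} (hx : x ∉ P) (hy : y ∈ P)
    (hz : z ∈ P) (hyz : y ≠ z) : (P ∩ {x,y,z}).ncard = 2 := by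
  have he : P ∩ {x,y,z} = {y,z} := by
    ext t
    simp only [Set.mem_inter_iff, Set.mem_insert_iff, Set.mem_singleton_iff]
    constructor
    · rintro ⟨ht, rfl|rfl|rfl⟩ <;> tauto
    · rintro (rfl|rfl) <;> tauto
  rw [he, Set.ncard_pair hyz]

open scoped symmDiff in
lemma symmDiff_swap {α : Type*} {P : Set α} {u v : α} (hu : u ∈ P) (hv : v ∉ P)
    (huv : u ≠ v) : P ∆ ((P \ {u}) ∪ {v}) = {u, v} := by
  ext t
  rw [Set.mem_symmDiff]
  simp only [Set.mem_union, Set.mem_diff, Set.mem_insert_iff, Set.mem_singleton_iff]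
  by_cases h1 : t = u <;> by_cases h2 : t = v <;> subst_eqs <;> tauto

lemma valid_update_E {n : ℕ} {w : Fin n → St} (hw : Valid w) (j : Fin n) :
    Valid (Function.update w j .E) := by
  refine ⟨fun k hk => ?_, fun k hk => ?_, fun k l hl hkB hlA => ?_⟩
  · rcases eq_or_ne k j with rfl | hkj
    · simp at hk
    · rw [Function.update_of_ne hkj] at hk; exact hw.1 k hk
  · rcases eq_or_ne k j with rfl | hkj
    · simp at hk
    · rw [Function.update_of_ne hkj] at hk; exact hw.2.1 k hk
  · rcases eq_or_ne k j with rfl | hkj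
    · simp at hkB
    rw [Function.update_of_ne hkj] at hkB
    rcases eq_or_ne l j with rfl | hlj
    · simp at hlA
    · rw [Function.update_of_ne hlj] at hlA
      exact hw.2.2 k l hl hkB hlA

lemma not_memE {n : ℕ} {w : Fin n → St} {j : Fin n} (h : w j ≠ .E) :
    fa ^ (j.1:ℤ) ∉ enc w := by
  intro hmem
  obtain ⟨hlt, hE⟩ := powE_mem.1 hmem
  exact h (by rw [show (⟨j.1, hlt⟩ : Fin n) = j from Fin.ext rfl] at hE; exact hE)

lemma move_EA {n : ℕ} {w : Fin n → St} (hw : Valid w) {i j : Fin n} (hij : j.1 = i.1 + 1)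
    (hwi : w i = .E) (hwj : w j = .A) :
    FMove (enc w) (enc (Function.update w j .E)) := by
  set g : F2 := fa ^ (i.1:ℤ) with hgdef
  have hne1 : g ≠ g * fa := fun h => fa_ne_one (left_eq_mul.1 h)
  have hne2 : g ≠ g * fb := fun h => fb_ne_one (left_eq_mul.1 h)
  have hne3 : g * fa ≠ g * fb := fun h => fa_ne_fb (mul_left_cancel h)
  have hg : g ∈ enc w := mem_enc.2 ⟨i, by rw [hwi, posE]⟩
  have hgb : g * fb ∈ enc w := mem_enc.2 ⟨j, by rw [hwj, pos_j_A i j hij]⟩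
  have hga : g * fa ∉ enc w := by
    rw [← pos_j_E i j hij, posE]
    exact not_memE (by rw [hwj]; simp)
  have hQ : enc (Function.update w j .E) = (enc w \ {g * fb}) ∪ {g * fa} := by
    rw [enc_update hw j .E, hwj, pos_j_A i j hij, pos_j_E i j hij]
  have hba : g * fb ≠ g * fa := fun h => hne3 h.symm
  refine ⟨g, ?_, ?_, ?_, ?_⟩
  · rw [W_eq]
    exact inter_card2b hg hga hgb hne2
  · rw [W_eq, hQ]
    have h1 : g ∈ (enc w \ {g * fb}) ∪ {g * fa} := Or.inl ⟨hg, by simp [hne2]⟩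
    have h2 : g * fa ∈ (enc w \ {g * fb}) ∪ {g * fa} := Or.inr rfl
    have h3 : g * fb ∉ (enc w \ {g * fb}) ∪ {g * fa} := by
      rintro (⟨_, h⟩ | h)
      · simp at h
      · exact hne3 (by simpa using h.symm)
    exact inter_card2a h1 h2 h3 hne1
  · rw [W_eq, hQ, symmDiff_swap hgb hga hba]
    rintro t (rfl | rfl) <;> simp
  · rw [hQ, symmDiff_swap hgb hga hba]
    exact Set.ncard_pair hba

lemma move_BE {n : ℕ} {w : Fin n → St} (hw : Valid w) {i j : Fin n} (hij : j.1 = i.1 + 1)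
    (hwi : w i = .B) (hwj : w j = .E) :
    FMove (enc w) (enc (Function.update w i .E)) := by
  set g : F2 := fa ^ (i.1:ℤ) with hgdef
  have hne1 : g ≠ g * fa := fun h => fa_ne_one (left_eq_mul.1 h)
  have hne2 : g ≠ g * fb := fun h => fb_ne_one (left_eq_mul.1 h)
  have hne3 : g * fa ≠ g * fb := fun h => fa_ne_fb (mul_left_cancel h)
  have hbg : g * fb ≠ g := fun h => hne2 h.symm
  have hg : g ∉ enc w := not_memE (by rw [hwi]; simp)
  have hgb : g * fb ∈ enc w := mem_enc.2 ⟨i, by rw [hwi, posB]⟩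
  have hga : g * fa ∈ enc w := by
    rw [← pos_j_E i j hij]
    exact mem_enc.2 ⟨j, by rw [hwj]⟩
  have hQ : enc (Function.update w i .E) = (enc w \ {g * fb}) ∪ {g} := by
    rw [enc_update hw i .E, hwi, posB, posE]
  refine ⟨g, ?_, ?_, ?_, ?_⟩
  · rw [W_eq]
    exact inter_card2c hg hga hgb hne3
  · rw [W_eq, hQ]
    have h1 : g ∈ (enc w \ {g * fb}) ∪ {g} := Or.inr rfl
    have h2 : g * fa ∈ (enc w \ {g * fb}) ∪ {g} := Or.inl ⟨hga, by simp [hne3]⟩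
    have h3 : g * fb ∉ (enc w \ {g * fb}) ∪ {g} := by
      rintro (⟨_, h⟩ | h)
      · simp at h
      · exact hne2 (by simpa using h.symm)
    exact inter_card2a h1 h2 h3 hne1
  · rw [W_eq, hQ, symmDiff_swap hgb hg hbg]
    rintro t (rfl | rfl) <;> simp
  · rw [hQ, symmDiff_swap hgb hg hbg]
    exact Set.ncard_pair hbg

lemma fmove_symm : Symmetric FMove := by
  rintro P Q ⟨g, h1, h2, h3, h4⟩
  exact ⟨g, h2, h1, symmDiff_comm P Q ▸ h3, symmDiff_comm P Q ▸ h4⟩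

lemma reach {n : ℕ} : ∀ (k : ℕ) (w : Fin n → St),
    (Finset.univ.filter (fun i => w i ≠ .E)).card ≤ k → Valid w →
    Relation.ReflTransGen FMove (enc w) (enc (fun _ : Fin n => .E)) := by
  intro k
  induction k with
  | zero =>
    intro w hcard _
    have : w = fun _ => .E := by
      funext i
      by_contra hc
      have : i ∈ Finset.univ.filter (fun i => w i ≠ .E) := by simp [hc]
      have := Finset.card_pos.2 ⟨i, this⟩
      omega
    rw [this]
  | succ k ih =>
    intro w hcard hw
    by_cases hE : ∀ i, w i = .E
    · have : w = fun _ => .E := funext hE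
      rw [this]
    push_neg at hE
    -- find the move target
    have hstep : ∃ j : Fin n, w j ≠ .E ∧ FMove (enc w) (enc (Function.update w j .E)) := by
      by_cases hA : ∃ i, w i = .A
      · -- leftmost A
        have hne : (Finset.univ.filter (fun i => w i = .A)).Nonempty := by
          obtain ⟨i, hi⟩ := hA
          exact ⟨i, by simp [hi]⟩
        set i0 := (Finset.univ.filter (fun i => w i = .A)).min' hne with hi0def
        have hi0 : w i0 = .A := by
          have := (Finset.univ.filter (fun i => w i = .A)).min'_mem hne
          simpa using this
        have hpos : 0 < i0.1 := hw.1 i0 hi0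
        have hprevlt : i0.1 - 1 < n := by omega
        set ip : Fin n := ⟨i0.1 - 1, by omega⟩ with hipdef
        have hij : i0.1 = ip.1 + 1 := by simp [hipdef]; omega
        have hipA : w ip ≠ .A := by
          intro hc
          have : i0 ≤ ip := Finset.min'_le _ _ (by simp [hc])
          rw [Fin.le_def] at this
          omega
        have hipB : w ip ≠ .B := fun hc => hw.2.2 ip i0 hij hc hi0
        have hipE : w ip = .E := by
          cases h : w ip
          · rfl
          · exact absurd h hipA
          · exact absurd h hipB
        exact ⟨i0, by rw [hi0]; simp, move_EA hw hij hipE hi0⟩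
      · -- rightmost B
        push_neg at hA
        obtain ⟨i, hi⟩ := hE
        have hiB : w i = .B := by
          cases h : w i
          · exact absurd h hi
          · exact absurd h (hA i)
          · rfl
        have hne : (Finset.univ.filter (fun i => w i = .B)).Nonempty := ⟨i, by simp [hiB]⟩
        set i0 := (Finset.univ.filter (fun i => w i = .B)).max' hne with hi0def
        have hi0 : w i0 = .B := by
          have := (Finset.univ.filter (fun i => w i = .B)).max'_mem hne
          simpa using this
        have hlt : i0.1 + 1 < n := hw.2.1 i0 hi0
        set jn : Fin n := ⟨i0.1 + 1, hlt⟩ with hjdef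
        have hij : jn.1 = i0.1 + 1 := rfl
        have hjB : w jn ≠ .B := by
          intro hc
          have : jn ≤ i0 := Finset.le_max' _ _ (by simp [hc])
          rw [Fin.le_def] at this
          omega
        have hjE : w jn = .E := by
          cases h : w jn
          · rfl
          · exact absurd h (hA jn)
          · exact absurd h hjB
        exact ⟨i0, by rw [hi0]; simp, move_BE hw hij hi0 hjE⟩
    obtain ⟨j, hjne, hmv⟩ := hstep
    have hw' : Valid (Function.update w j .E) := valid_update_E hw j
    have hcard' : (Finset.univ.filter (fun i => Function.update w j .E i ≠ .E)).card ≤ k := by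
      have hss : Finset.univ.filter (fun i => Function.update w j .E i ≠ .E) ⊆
          (Finset.univ.filter (fun i => w i ≠ .E)).erase j := by
        intro t ht
        simp only [Finset.mem_filter, Finset.mem_univ, true_and] at ht
        rcases eq_or_ne t j with rfl | htj
        · simp at ht
        · rw [Function.update_of_ne htj] at ht
          exact Finset.mem_erase.2 ⟨htj, by simp [ht]⟩
      have h1 := Finset.card_le_card hss
      have h2 : ((Finset.univ.filter (fun i => w i ≠ .E)).erase j).card =
          (Finset.univ.filter (fun i => w i ≠ .E)).card - 1 :=
        Finset.card_erase_of_mem (by simp [hjne])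
      have h3 : 0 < (Finset.univ.filter (fun i => w i ≠ .E)).card :=
        Finset.card_pos.2 ⟨j, by simp [hjne]⟩
      omega
    exact Relation.ReflTransGen.head hmv (ih _ hcard' hw')

lemma valid_allE {n : ℕ} : Valid (fun _ : Fin n => St.E) :=
  ⟨fun k hk => by simp at hk, fun k hk => by simp at hk, fun k l hl hkB => by simp at hkB⟩

lemma lineF_eq (n : ℕ) : lineF n = enc (fun _ : Fin n => St.E) := by
  ext x
  simp only [lineF, Set.mem_setOf_eq, mem_enc, posE]
  constructor
  · rintro ⟨i, hi, rfl⟩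
    exact ⟨⟨i, hi⟩, by rw [zpow_natCast]⟩
  · rintro ⟨i, rfl⟩
    exact ⟨i.1, i.2, by rw [zpow_natCast]⟩

lemma orbit_eq (n : ℕ) :
    {Q : Set F2 | Relation.ReflTransGen FMove (lineF n) Q} =
      enc '' {w : Fin n → St | Valid w} := by
  ext Q
  simp only [Set.mem_setOf_eq, Set.mem_image]
  constructor
  · intro h
    induction h with
    | refl => exact ⟨fun _ => .E, valid_allE, (lineF_eq n).symm⟩
    | tail hsteps hstep ih =>
      obtain ⟨w, hw, hb⟩ := ih
      subst hb
      obtain ⟨w', hw', hQ⟩ := fmove_closure hw hstep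
      exact ⟨w', hw', hQ.symm⟩
  · rintro ⟨w, hw, rfl⟩
    rw [lineF_eq]
    exact (@Relation.ReflTransGen.stdSymm _ _ ⟨fun _ _ h => fmove_symm h⟩).symm _ _ (reach _ w le_rfl hw)

lemma enc_inj {n : ℕ} {w w' : Fin n → St} (hw : Valid w) (hw' : Valid w')
    (h : enc w = enc w') : w = w' := by
  by_contra hne
  have hex : ∃ k, ∃ hk : k < n, w ⟨k, hk⟩ ≠ w' ⟨k, hk⟩ := by
    by_contra hall
    push_neg at hall
    exact hne (funext fun i => by simpa using hall i.1 i.2)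
  classical
  obtain ⟨hk0, hne0⟩ := Nat.find_spec hex
  set k0 := Nat.find hex with hk0def
  set i : Fin n := ⟨k0, hk0⟩ with hidef
  have hmin : ∀ m (hm : m < n), m < k0 → w ⟨m, hm⟩ = w' ⟨m, hm⟩ := by
    intro m hm hlt
    by_contra hc
    exact Nat.find_min hex hlt ⟨hm, hc⟩
  -- helper : if one side is E
  have hEcase : ∀ (u u' : Fin n → St), enc u = enc u' → u i = .E → u' i ≠ .E → False := by
    intro u u' hu hE hE'
    have : fa ^ ((k0:ℕ):ℤ) ∈ enc u := mem_enc.2 ⟨i, by rw [hE, posE]⟩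
    rw [hu] at this
    obtain ⟨hlt, hE2⟩ := powE_mem.1 this
    exact hE' (by rw [show (⟨k0, hlt⟩ : Fin n) = i from Fin.ext rfl] at hE2; exact hE2)
  have hABcase : ∀ (u u' : Fin n → St), Valid u → Valid u' → enc u = enc u' →
      (∀ m (hm : m < n), m < k0 → u ⟨m, hm⟩ = u' ⟨m, hm⟩) →
      u i = .A → u' i = .B → False := by
    intro u u' hu hu' huu hm hA hB
    have hpos : 0 < k0 := hu.1 i hA
    have h1 : fa ^ (((k0-1:ℕ)):ℤ) * fb ∈ enc u := by
      refine mem_enc.2 ⟨i, ?_⟩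
      rw [hA, posA]
      congr 2
      show ((k0-1:ℕ):ℤ) = (k0:ℤ) - 1
      omega
    rw [huu] at h1
    rcases powB_mem.1 h1 with ⟨hlt, hB'⟩ | ⟨hlt, hA'⟩
    · -- u' (k0-1) = B ; then u (k0-1) = B and u k0 = A : contradiction with Valid u
      have heq := hm (k0-1) hlt (by omega)
      rw [← heq] at hB'
      exact hu.2.2 ⟨k0-1, hlt⟩ i (by show k0 = k0 - 1 + 1; omega) hB' hA
    · -- u' (k0-1+1) = A, i.e. u' k0 = A, contradiction with u' i = B
      have : (⟨k0-1+1, hlt⟩ : Fin n) = i := Fin.ext (by show k0 - 1 + 1 = k0; omega)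
      rw [this, hB] at hA'
      simp at hA'
  cases hwi : w i <;> cases hwi' : w' i
  · exact hne0 (by rw [hwi, hwi'])
  · exact hEcase w w' h hwi (by rw [hwi']; simp)
  · exact hEcase w w' h hwi (by rw [hwi']; simp)
  · exact hEcase w' w h.symm hwi' (by rw [hwi]; simp)
  · exact hne0 (by rw [hwi, hwi'])
  · exact hABcase w w' hw hw' h hmin hwi hwi'
  · exact hEcase w' w h.symm hwi' (by rw [hwi]; simp)
  · exact hABcase w' w hw' hw h.symm (fun m hm hlt => (hmin m hm hlt).symm) hwi' hwi
  · exact hne0 (by rw [hwi, hwi'])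

/-! ### Counting -/

instance : Fintype St :=
  ⟨⟨{.E, .A, .B}, by decide⟩, fun x => by cases x <;> decide⟩

def NB {n : ℕ} (w : Fin n → St) : Prop :=
  ∀ i j : Fin n, j.1 = i.1 + 1 → w i = .B → w j ≠ .A

def NL {n : ℕ} (w : Fin n → St) : Prop := ∀ i : Fin n, w i = .B → i.1 + 1 < n

instance {n : ℕ} : DecidablePred (NB (n := n)) := fun w => by unfold NB; infer_instance
instance {n : ℕ} : DecidablePred (NL (n := n)) := fun w => by unfold NL; infer_instance
instance {n : ℕ} : DecidablePred (Valid (n := n)) := fun w => by unfold Valid; infer_instance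

def Dn (n : ℕ) : Finset (Fin (n+1) → St) := Finset.univ.filter (fun w => NB w ∧ NL w)

def Gn (n : ℕ) (s : St) : Finset (Fin (n+1) → St) :=
  Finset.univ.filter (fun w => NB w ∧ NL w ∧ w 0 = s)

lemma Dn_card (n : ℕ) :
    (Dn n).card = (Gn n .E).card + (Gn n .A).card + (Gn n .B).card := by
  have hd1 : Disjoint (Gn n .E) (Gn n .A) := by
    rw [Finset.disjoint_left]
    intro w hw hw'
    simp only [Gn, Finset.mem_filter] at hw hw'
    rw [hw.2.2.2] at hw'
    simp at hw'
  have hd2 : Disjoint (Gn n .E ∪ Gn n .A) (Gn n .B) := by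
    rw [Finset.disjoint_left]
    intro w hw hw'
    simp only [Gn, Finset.mem_filter, Finset.mem_union] at hw hw'
    rcases hw with h | h <;> rw [h.2.2.2] at hw' <;> simp at hw'
  have hsplit : Dn n = (Gn n .E ∪ Gn n .A) ∪ Gn n .B := by
    ext w
    simp only [Dn, Gn, Finset.mem_filter, Finset.mem_univ, true_and, Finset.mem_union]
    cases h : w 0 <;> simp [h] <;> tauto
  rw [hsplit, Finset.card_union_of_disjoint hd2, Finset.card_union_of_disjoint hd1]

lemma Gn_succ_card (n : ℕ) (s : St) :
    (Gn (n+1) s).card = (Finset.univ.filter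
      (fun v : Fin (n+1) → St => NB v ∧ NL v ∧ (s = .B → v 0 ≠ .A))).card := by
  refine Finset.card_bij' (fun w _ => Fin.tail w) (fun v _ => Fin.cons s v) ?hi ?hj ?li ?ri
  case hi =>
    intro w hw
    simp only [Gn, Finset.mem_filter, Finset.mem_univ, true_and] at hw ⊢
    obtain ⟨hNB, hNL, h0⟩ := hw
    refine ⟨?_, ?_, ?_⟩
    · intro i j hij hB hA
      refine hNB i.succ j.succ ?_ hB hA
      simp only [Fin.val_succ]
      omega
    · intro i hB
      have := hNL i.succ hB
      simp only [Fin.val_succ] at this ⊢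
      omega
    · intro hs hA
      have h1 : (0 : Fin (n+1)).succ = (1 : Fin (n+2)) := Fin.ext (by simp)
      refine hNB 0 1 (by simp) (h0.trans hs) ?_
      rw [← h1]
      exact hA
  case hj =>
    intro v hv
    simp only [Finset.mem_filter, Finset.mem_univ, true_and] at hv
    obtain ⟨hNB, hNL, hextra⟩ := hv
    simp only [Gn, Finset.mem_filter, Finset.mem_univ, true_and]
    refine ⟨?_, ?_, by simp⟩
    · intro i j hij hB hA
      rcases Fin.eq_zero_or_eq_succ i with rfl | ⟨k, rfl⟩
      · have hj : j = (0 : Fin (n+1)).succ := Fin.ext (by simpa using hij)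
        rw [Fin.cons_zero] at hB
        rw [hj, Fin.cons_succ] at hA
        exact hextra hB hA
      · rcases Fin.eq_zero_or_eq_succ j with rfl | ⟨m, rfl⟩
        · simp at hij
        rw [Fin.cons_succ] at hB hA
        refine hNB k m ?_ hB hA
        simp only [Fin.val_succ] at hij
        omega
    · intro i hB
      rcases Fin.eq_zero_or_eq_succ i with rfl | ⟨k, rfl⟩
      · simp
      · rw [Fin.cons_succ] at hB
        have := hNL k hB
        simp only [Fin.val_succ]
        omega
  case li =>
    intro w hw
    simp only [Gn, Finset.mem_filter, Finset.mem_univ, true_and] at hw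
    show Fin.cons s (Fin.tail w) = w
    rw [show s = w 0 from hw.2.2.symm]
    exact Fin.cons_self_tail w
  case ri =>
    intro v _
    funext i
    simp [Fin.tail]

lemma GE_card (n : ℕ) : (Gn (n+1) .E).card = (Dn n).card := by
  rw [Gn_succ_card]
  congr 1
  ext v
  simp only [Dn, Finset.mem_filter, Finset.mem_univ, true_and]
  constructor
  · rintro ⟨h1, h2, _⟩; exact ⟨h1, h2⟩
  · rintro ⟨h1, h2⟩; exact ⟨h1, h2, by simp⟩

lemma GA_card (n : ℕ) : (Gn (n+1) .A).card = (Dn n).card := by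
  rw [Gn_succ_card]
  congr 1
  ext v
  simp only [Dn, Finset.mem_filter, Finset.mem_univ, true_and]
  constructor
  · rintro ⟨h1, h2, _⟩; exact ⟨h1, h2⟩
  · rintro ⟨h1, h2⟩; exact ⟨h1, h2, by simp⟩

lemma GB_card (n : ℕ) : (Gn (n+1) .B).card = (Gn n .E).card + (Gn n .B).card := by
  rw [Gn_succ_card]
  have hd : Disjoint (Gn n .E) (Gn n .B) := by
    rw [Finset.disjoint_left]
    intro w hw hw'
    simp only [Gn, Finset.mem_filter] at hw hw'
    rw [hw.2.2.2] at hw'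
    simp at hw'
  rw [← Finset.card_union_of_disjoint hd]
  congr 1
  ext v
  simp only [Gn, Finset.mem_filter, Finset.mem_univ, true_and, Finset.mem_union]
  constructor
  · rintro ⟨h1, h2, h3⟩
    have := h3 (by trivial)
    cases h : v 0
    · exact Or.inl ⟨h1, h2, rfl⟩
    · exact absurd h this
    · exact Or.inr ⟨h1, h2, rfl⟩
  · rintro (⟨h1, h2, h3⟩ | ⟨h1, h2, h3⟩) <;> exact ⟨h1, h2, by rw [h3]; simp⟩

lemma G_cards (n : ℕ) : (Gn n .E).card = Nat.fib (2*n+1) ∧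
    (Gn n .A).card = Nat.fib (2*n+1) ∧ (Gn n .B).card = Nat.fib (2*n) := by
  induction n with
  | zero => refine ⟨by decide, by decide, by decide⟩
  | succ k ih =>
    obtain ⟨hE, hA, hB⟩ := ih
    have hD : (Dn k).card = Nat.fib (2*k+1) + Nat.fib (2*k+1) + Nat.fib (2*k) := by
      rw [Dn_card, hE, hA, hB]
    have f1 : Nat.fib (2*k+2) = Nat.fib (2*k) + Nat.fib (2*k+1) := Nat.fib_add_two
    have f2 : Nat.fib (2*k+3) = Nat.fib (2*k+1) + Nat.fib (2*k+2) := Nat.fib_add_two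
    refine ⟨?_, ?_, ?_⟩
    · rw [GE_card, hD, show 2*(k+1)+1 = 2*k+3 from by ring, f2, f1]
      ring
    · rw [GA_card, hD, show 2*(k+1)+1 = 2*k+3 from by ring, f2, f1]
      ring
    · rw [GB_card, hE, hB, show 2*(k+1) = 2*k+2 from by ring, f1]
      ring

lemma valid_iff {n : ℕ} (w : Fin (n+1) → St) :
    Valid w ↔ NB w ∧ NL w ∧ w 0 ≠ .A := by
  constructor
  · intro hw
    refine ⟨hw.2.2, hw.2.1, fun hA => ?_⟩
    have := hw.1 0 hA
    simp at this
  · rintro ⟨h1, h2, h3⟩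
    refine ⟨fun i hA => ?_, h2, h1⟩
    rcases Nat.eq_zero_or_pos i.1 with h0 | h0
    · exact absurd (by rw [show (0 : Fin (n+1)) = i from Fin.ext h0.symm]; exact hA) h3
    · exact h0

lemma count_valid (n : ℕ) :
    (Finset.univ.filter (fun w : Fin (n+1) → St => Valid w)).card = Nat.fib (2*(n+1)) := by
  have hd : Disjoint (Gn n .E) (Gn n .B) := by
    rw [Finset.disjoint_left]
    intro w hw hw'
    simp only [Gn, Finset.mem_filter] at hw hw'
    rw [hw.2.2.2] at hw'
    simp at hw'
  have hsplit : Finset.univ.filter (fun w : Fin (n+1) → St => Valid w) =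
      Gn n .E ∪ Gn n .B := by
    ext w
    simp only [Gn, Finset.mem_filter, Finset.mem_univ, true_and, Finset.mem_union, valid_iff]
    constructor
    · rintro ⟨h1, h2, h3⟩
      cases h : w 0
      · exact Or.inl ⟨h1, h2, rfl⟩
      · exact absurd h h3
      · exact Or.inr ⟨h1, h2, rfl⟩
    · rintro (⟨h1, h2, h3⟩ | ⟨h1, h2, h3⟩) <;> exact ⟨h1, h2, by rw [h3]; simp⟩
  rw [hsplit, Finset.card_union_of_disjoint hd, (G_cards n).1, (G_cards n).2.2,
    show 2*(n+1) = 2*n+2 from by ring, Nat.fib_add_two]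
  ring

/-- The solitaire orbit of the line `L_n` on `F₂` has cardinality
`(1/(2ⁿ√5))·((3+√5)ⁿ - (3-√5)ⁿ)`. -/
theorem free_line_orbit_card (n : ℕ) (hn : 1 ≤ n) :
    (({Q : Set F2 | Relation.ReflTransGen FMove (lineF n) Q}.ncard : ℝ)) =
      (1 / (2 ^ n * Real.sqrt 5)) *
        ((3 + Real.sqrt 5) ^ n - (3 - Real.sqrt 5) ^ n) := by
  obtain ⟨m, rfl⟩ : ∃ m, n = m + 1 := ⟨n - 1, by omega⟩
  have horb : {Q : Set F2 | Relation.ReflTransGen FMove (lineF (m+1)) Q}.ncard =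
      Nat.fib (2*(m+1)) := by
    rw [orbit_eq]
    have hinj : Set.InjOn enc {w : Fin (m+1) → St | Valid w} :=
      fun w hw w' hw' h => enc_inj hw hw' h
    rw [Set.ncard_image_of_injOn hinj]
    have hset : {w : Fin (m+1) → St | Valid w} =
        ↑(Finset.univ.filter (fun w : Fin (m+1) → St => Valid w)) := by
      ext w; simp
    rw [hset, Set.ncard_coe_finset, count_valid]
  rw [horb, Real.coe_fib_eq]
  have hs5 : Real.sqrt 5 ≠ 0 := by
    intro h
    have := Real.sqrt_eq_zero'.1 h
    norm_num at this
  have hφ : Real.goldenRatio ^ (2*(m+1)) = (3 + Real.sqrt 5)^(m+1) / 2^(m+1) := by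
    rw [pow_mul, show Real.goldenRatio ^ 2 = (3 + Real.sqrt 5)/2 from by rw [Real.goldenRatio_sq]; unfold Real.goldenRatio; ring,
      div_pow]
  have hψ : Real.goldenConj ^ (2*(m+1)) = (3 - Real.sqrt 5)^(m+1) / 2^(m+1) := by
    rw [pow_mul, show Real.goldenConj ^ 2 = (3 - Real.sqrt 5)/2 from by rw [Real.goldenConj_sq]; unfold Real.goldenConj; ring,
      div_pow]
  rw [hφ, hψ]
  have h2 : (2:ℝ)^(m+1) ≠ 0 := by positivity
  field_simp
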